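/- Let $R = k[x_1,\dots,x_m]$ and let $I_1, I_2$ be monomial ideals of $R$. Then $\partial^*(I_1 I_2) = \partial^*(I_1) I_2 + I_1 \partial^*(I_2)$, where $\partial^*(L)$ denotes the ideal generated by all $f/x_i$ with $f$ a minimal monomial generator of $L$ and $x_i$ a variable dividing $f$. -/

import Mathlib

open MvPolynomial

variable {m : ℕ} {k : Type*}

/-- An ideal of `k[x_1, …, x_m]` is a monomial ideal if it is generated by monomials. -/
def IsMonomialIdeal [Field k] (I : Ideal (MvPolynomial (Fin m) k)) : Prop :=
  ∃ S : Set (Fin m →₀ ℕ), I = Ideal.span ((fun e => monomial e (1 : k)) '' S)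

/-- `e` is the exponent vector of a minimal monomial generator of `I`: the monomial `x^e`
lies in `I` and no proper divisor of it lies in `I`. -/
def IsMinMonomialGen [Field k] (I : Ideal (MvPolynomial (Fin m) k)) (e : Fin m →₀ ℕ) : Prop :=
  monomial e (1 : k) ∈ I ∧ ∀ e' : Fin m →₀ ℕ, e' ≤ e → e' ≠ e → monomial e' (1 : k) ∉ I

/-- `∂*(I)`: the ideal generated by all quotients `f / x_i`, where `f` runs over the minimal
monomial generators of `I` and `x_i` over the variables dividing `f`. -/
noncomputable def partialStar [Field k] (I : Ideal (MvPolynomial (Fin m) k)) :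
    Ideal (MvPolynomial (Fin m) k) :=
  Ideal.span { p | ∃ (e : Fin m →₀ ℕ) (i : Fin m), IsMinMonomialGen I e ∧ e i ≠ 0 ∧
    p = monomial (e - Finsupp.single i 1) (1 : k) }

section Aux

open Pointwise

variable [Field k]

/-- Every exponent in the support of a polynomial in a monomial span is divisible
by a generator. -/
private lemma supp_dvd (S : Set (Fin m →₀ ℕ)) {p : MvPolynomial (Fin m) k}
    (hp : p ∈ Ideal.span ((fun e => monomial e (1 : k)) '' S)) :
    ∀ d ∈ p.support, ∃ s ∈ S, s ≤ d := by
  classical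
  refine Submodule.span_induction ?_ ?_ ?_ ?_ hp
  · rintro q ⟨s, hs, rfl⟩ d hd
    rw [support_monomial, if_neg (one_ne_zero)] at hd
    simp only [Finset.mem_singleton] at hd
    exact ⟨s, hs, le_of_eq hd.symm⟩
  · simp
  · intro x y _ _ hx hy d hd
    rcases Finset.mem_union.1 (MvPolynomial.support_add hd) with h | h
    · exact hx d h
    · exact hy d h
  · intro a x _ hx d hd
    rw [smul_eq_mul] at hd
    have := MvPolynomial.support_mul a x hd
    rcases Finset.mem_add.1 this with ⟨y, _, z, hz, rfl⟩
    obtain ⟨s, hs, hsz⟩ := hx z hz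
    exact ⟨s, hs, hsz.trans (le_add_self)⟩

/-- Membership of a monomial in a monomial span. -/
private lemma mem_span_mon_iff (S : Set (Fin m →₀ ℕ)) (e : Fin m →₀ ℕ) :
    monomial e (1 : k) ∈ Ideal.span ((fun e => monomial e (1 : k)) '' S) ↔ ∃ s ∈ S, s ≤ e := by
  classical
  constructor
  · intro h
    refine supp_dvd S h e ?_
    rw [support_monomial, if_neg (one_ne_zero)]
    simp
  · rintro ⟨s, hs, hse⟩
    have heq : monomial e (1 : k) = monomial (e - s) 1 * monomial s 1 := by
      rw [monomial_mul, one_mul, tsub_add_cancel_of_le hse]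
    rw [heq]
    exact Ideal.mul_mem_left _ _ (Ideal.subset_span ⟨s, hs, rfl⟩)

/-- Below any monomial of `I` there is a minimal monomial generator of `I`. -/
private lemma exists_min_gen_le (I : Ideal (MvPolynomial (Fin m) k)) {e : Fin m →₀ ℕ}
    (he : monomial e (1 : k) ∈ I) : ∃ e' ≤ e, IsMinMonomialGen I e' := by
  classical
  set T : Finset (Fin m →₀ ℕ) := (Finset.Iic e).filter (fun d => monomial d (1 : k) ∈ I)
    with hTdef
  have hT : T.Nonempty := ⟨e, by simp [hTdef, he]⟩
  obtain ⟨e', he', hmin⟩ := T.exists_minimal hT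
  simp only [hTdef, Finset.mem_filter, Finset.mem_Iic] at he'
  refine ⟨e', he'.1, he'.2, fun d hd hne hdI => ?_⟩
  have hdT : d ∈ T := by
    simp only [hTdef, Finset.mem_filter, Finset.mem_Iic]
    exact ⟨hd.trans he'.1, hdI⟩
  exact hne (le_antisymm hd (hmin hdT hd))

private lemma partialStar_eq (I : Ideal (MvPolynomial (Fin m) k)) :
    partialStar I = Ideal.span ((fun e => monomial e (1 : k)) ''
      {d | ∃ (e : Fin m →₀ ℕ) (i : Fin m), IsMinMonomialGen I e ∧ e i ≠ 0 ∧
        d = e - Finsupp.single i 1}) := by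
  unfold partialStar
  congr 1
  ext p
  constructor
  · rintro ⟨e, i, h1, h2, rfl⟩
    exact ⟨e - Finsupp.single i 1, ⟨e, i, h1, h2, rfl⟩, rfl⟩
  · rintro ⟨d, ⟨e, i, h1, h2, rfl⟩, rfl⟩
    exact ⟨e, i, h1, h2, rfl⟩

private lemma mem_partialStar_iff (I : Ideal (MvPolynomial (Fin m) k)) (t : Fin m →₀ ℕ) :
    monomial t (1 : k) ∈ partialStar I ↔
      ∃ (e : Fin m →₀ ℕ) (i : Fin m), IsMinMonomialGen I e ∧ e i ≠ 0 ∧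
        e - Finsupp.single i 1 ≤ t := by
  rw [partialStar_eq, mem_span_mon_iff]
  constructor
  · rintro ⟨s, ⟨e, i, h1, h2, rfl⟩, hle⟩
    exact ⟨e, i, h1, h2, hle⟩
  · rintro ⟨e, i, h1, h2, hle⟩
    exact ⟨e - Finsupp.single i 1, ⟨e, i, h1, h2, rfl⟩, hle⟩

/-- Membership of a monomial in a product of monomial ideals. -/
private lemma mem_mul_iff (S₁ S₂ : Set (Fin m →₀ ℕ))
    {I₁ I₂ : Ideal (MvPolynomial (Fin m) k)}
    (hS₁ : I₁ = Ideal.span ((fun e => monomial e (1 : k)) '' S₁))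
    (hS₂ : I₂ = Ideal.span ((fun e => monomial e (1 : k)) '' S₂)) (e : Fin m →₀ ℕ) :
    monomial e (1 : k) ∈ I₁ * I₂ ↔
      ∃ e₁ e₂ : Fin m →₀ ℕ, monomial e₁ (1 : k) ∈ I₁ ∧ monomial e₂ (1 : k) ∈ I₂ ∧
        e₁ + e₂ ≤ e := by
  constructor
  · intro h
    rw [hS₁, hS₂, Ideal.span_mul_span] at h
    have hsub : (⋃ s ∈ (fun e => monomial e (1 : k)) '' S₁,
        ⋃ t ∈ (fun e => monomial e (1 : k)) '' S₂, {s * t}) ⊆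
        (fun e => monomial e (1 : k)) '' (S₁ + S₂) := by
      rintro x hx
      simp only [Set.mem_iUnion, Set.mem_singleton_iff] at hx
      obtain ⟨s, ⟨a, ha, rfl⟩, t, ⟨b, hb, rfl⟩, rfl⟩ := hx
      exact ⟨a + b, Set.add_mem_add ha hb, by rw [monomial_mul, one_mul]⟩
    have h' : monomial e (1 : k) ∈
        Ideal.span ((fun e => monomial e (1 : k)) '' (S₁ + S₂)) :=
      Ideal.span_mono (fun x hx => hsub (by
        obtain ⟨s, hs, t, ht, rfl⟩ := Set.mem_mul.1 hx
        simp only [Set.mem_iUnion, Set.mem_singleton_iff]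
        exact ⟨s, hs, t, ht, rfl⟩)) h
    obtain ⟨s, hs, hse⟩ := (mem_span_mon_iff _ _).1 h'
    obtain ⟨a, ha, b, hb, rfl⟩ := Set.mem_add.1 hs
    refine ⟨a, b, ?_, ?_, hse⟩
    · rw [hS₁]; exact Ideal.subset_span ⟨a, ha, rfl⟩
    · rw [hS₂]; exact Ideal.subset_span ⟨b, hb, rfl⟩
  · rintro ⟨e₁, e₂, h1, h2, hle⟩
    have heq : monomial e (1 : k)
        = monomial (e - (e₁ + e₂)) 1 * (monomial e₁ 1 * monomial e₂ 1) := by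
      rw [monomial_mul, one_mul, monomial_mul, one_mul, tsub_add_cancel_of_le hle]
    rw [heq]
    exact Ideal.mul_mem_left _ _ (Ideal.mul_mem_mul h1 h2)

/-- A minimal generator of a product of monomial ideals is the sum of minimal generators. -/
private lemma minGen_mul (S₁ S₂ : Set (Fin m →₀ ℕ))
    {I₁ I₂ : Ideal (MvPolynomial (Fin m) k)}
    (hS₁ : I₁ = Ideal.span ((fun e => monomial e (1 : k)) '' S₁))
    (hS₂ : I₂ = Ideal.span ((fun e => monomial e (1 : k)) '' S₂)) {e : Fin m →₀ ℕ}
    (h : IsMinMonomialGen (I₁ * I₂) e) :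
    ∃ e₁ e₂ : Fin m →₀ ℕ, IsMinMonomialGen I₁ e₁ ∧ IsMinMonomialGen I₂ e₂ ∧ e = e₁ + e₂ := by
  obtain ⟨f₁, f₂, hf₁, hf₂, hfe⟩ := (mem_mul_iff S₁ S₂ hS₁ hS₂ e).1 h.1
  obtain ⟨e₁, he₁le, he₁⟩ := exists_min_gen_le I₁ hf₁
  obtain ⟨e₂, he₂le, he₂⟩ := exists_min_gen_le I₂ hf₂
  have hle : e₁ + e₂ ≤ e := (add_le_add he₁le he₂le).trans hfe
  have hmm : monomial (e₁ + e₂) (1 : k) = monomial e₁ 1 * monomial e₂ 1 := by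
    rw [monomial_mul, one_mul]
  have hmem : monomial (e₁ + e₂) (1 : k) ∈ I₁ * I₂ := by
    rw [hmm]; exact Ideal.mul_mem_mul he₁.1 he₂.1
  by_cases heq : e₁ + e₂ = e
  · exact ⟨e₁, e₂, he₁, he₂, heq.symm⟩
  · exact absurd hmem (h.2 _ hle heq)

/-- The key lemma for the inclusion `∂*(I₁)·I₂ ⊆ ∂*(I₁I₂)`. -/
private lemma key (I₁ I₂ : Ideal (MvPolynomial (Fin m) k)) {e₁ : Fin m →₀ ℕ} {i : Fin m}
    (h : IsMinMonomialGen I₁ e₁) (hi : e₁ i ≠ 0) {s : Fin m →₀ ℕ}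
    (hs : monomial s (1 : k) ∈ I₂) :
    monomial ((e₁ - Finsupp.single i 1) + s) (1 : k) ∈ partialStar (I₁ * I₂) := by
  classical
  have hmem : monomial (e₁ + s) (1 : k) ∈ I₁ * I₂ := by
    rw [show monomial (e₁ + s) (1 : k) = monomial e₁ 1 * monomial s 1 by
      rw [monomial_mul, one_mul]]
    exact Ideal.mul_mem_mul h.1 hs
  obtain ⟨e, hle, hmin⟩ := exists_min_gen_le (I₁ * I₂) hmem
  rw [mem_partialStar_iff]
  have hle' : ∀ a, e a ≤ e₁ a + s a := by
    intro a
    have := Finsupp.le_def.1 hle a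
    simpa [Finsupp.add_apply] using this
  have hi1 : 1 ≤ e₁ i := Nat.one_le_iff_ne_zero.2 hi
  by_cases hcase : e i = e₁ i + s i
  · refine ⟨e, i, hmin, by omega, ?_⟩
    rw [Finsupp.le_def]
    intro a
    simp only [Finsupp.tsub_apply, Finsupp.add_apply, Finsupp.single_apply]
    rcases eq_or_ne i a with rfl | hne
    · rw [if_pos rfl]
      omega
    · rw [if_neg hne]
      have := hle' a
      omega
  · have hlt : e i < e₁ i + s i := lt_of_le_of_ne (hle' i) hcase
    have hne : e ≠ 0 := by
      rintro rfl
      have h0 : monomial (0 : Fin m →₀ ℕ) (1 : k) ∈ I₁ := Ideal.mul_le_left hmin.1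
      exact h.2 0 (zero_le (a := e₁)) (fun hh => hi (by rw [← hh]; simp)) h0
    obtain ⟨j, hj⟩ : ∃ j, e j ≠ 0 := by
      by_contra hc
      push_neg at hc
      exact hne (Finsupp.ext fun a => hc a)
    refine ⟨e, j, hmin, hj, ?_⟩
    rw [Finsupp.le_def]
    intro a
    simp only [Finsupp.tsub_apply, Finsupp.add_apply, Finsupp.single_apply]
    refine le_trans (Nat.sub_le _ _) ?_
    have hlea := hle' a
    rcases eq_or_ne i a with rfl | hne'
    · rw [if_pos rfl]
      omega
    · rw [if_neg hne']
      omega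

/-- One half of the hard inclusion. -/
private lemma incl_left (S₂ : Set (Fin m →₀ ℕ))
    (I₁ : Ideal (MvPolynomial (Fin m) k)) :
    partialStar I₁ * Ideal.span ((fun e => monomial e (1 : k)) '' S₂)
      ≤ partialStar (I₁ * Ideal.span ((fun e => monomial e (1 : k)) '' S₂)) := by
  rw [partialStar_eq I₁, Ideal.span_mul_span, Ideal.span_le]
  rintro x hx
  rw [Set.mem_mul] at hx
  obtain ⟨p, ⟨d, ⟨e₁, i, h1, h2, rfl⟩, rfl⟩, q, ⟨s, hsS, rfl⟩, rfl⟩ := hx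
  rw [monomial_mul, one_mul]
  exact key I₁ _ h1 h2 (Ideal.subset_span ⟨s, hsS, rfl⟩)

end Aux

/-- For monomial ideals `I₁, I₂` of `k[x_1, …, x_m]`,
`∂*(I₁ I₂) = ∂*(I₁) I₂ + I₁ ∂*(I₂)`. -/
theorem partialStar_mul [Field k] (I₁ I₂ : Ideal (MvPolynomial (Fin m) k))
    (h₁ : IsMonomialIdeal I₁) (h₂ : IsMonomialIdeal I₂) :
    partialStar (I₁ * I₂) = partialStar I₁ * I₂ + I₁ * partialStar I₂ := by
  classical
  obtain ⟨S₁, hS₁⟩ := h₁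
  obtain ⟨S₂, hS₂⟩ := h₂
  apply le_antisymm
  · rw [partialStar, Ideal.span_le]
    rintro p ⟨e, i, hmin, hi, rfl⟩
    obtain ⟨e₁, e₂, he₁, he₂, rfl⟩ := minGen_mul S₁ S₂ hS₁ hS₂ hmin
    have hi' : e₁ i ≠ 0 ∨ e₂ i ≠ 0 := by
      simp only [Finsupp.add_apply] at hi
      omega
    rcases hi' with hca | hca
    · have h1 : 1 ≤ e₁ i := Nat.one_le_iff_ne_zero.2 hca
      have heq : (e₁ + e₂) - Finsupp.single i 1 = (e₁ - Finsupp.single i 1) + e₂ := by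
        ext a
        simp only [Finsupp.tsub_apply, Finsupp.add_apply, Finsupp.single_apply]
        rcases eq_or_ne i a with rfl | hne
        · rw [if_pos rfl]; omega
        · rw [if_neg hne]; omega
      rw [heq, show monomial ((e₁ - Finsupp.single i 1) + e₂) (1 : k)
          = monomial (e₁ - Finsupp.single i 1) 1 * monomial e₂ 1 by rw [monomial_mul, one_mul]]
      refine Submodule.mem_sup_left (Ideal.mul_mem_mul ?_ he₂.1)
      exact Ideal.subset_span ⟨e₁, i, he₁, hca, rfl⟩
    · have h1 : 1 ≤ e₂ i := Nat.one_le_iff_ne_zero.2 hca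
      have heq : (e₁ + e₂) - Finsupp.single i 1 = e₁ + (e₂ - Finsupp.single i 1) := by
        ext a
        simp only [Finsupp.tsub_apply, Finsupp.add_apply, Finsupp.single_apply]
        rcases eq_or_ne i a with rfl | hne
        · rw [if_pos rfl]; omega
        · rw [if_neg hne]; omega
      rw [heq, show monomial (e₁ + (e₂ - Finsupp.single i 1)) (1 : k)
          = monomial e₁ 1 * monomial (e₂ - Finsupp.single i 1) 1 by rw [monomial_mul, one_mul]]
      refine Submodule.mem_sup_right (Ideal.mul_mem_mul he₁.1 ?_)
      exact Ideal.subset_span ⟨e₂, i, he₂, hca, rfl⟩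
  · apply sup_le
    · calc partialStar I₁ * I₂
          = partialStar I₁ * Ideal.span ((fun e => monomial e (1 : k)) '' S₂) := by rw [← hS₂]
        _ ≤ partialStar (I₁ * Ideal.span ((fun e => monomial e (1 : k)) '' S₂)) :=
            incl_left S₂ I₁
        _ = partialStar (I₁ * I₂) := by rw [← hS₂]
    · calc I₁ * partialStar I₂
          = partialStar I₂ * Ideal.span ((fun e => monomial e (1 : k)) '' S₁) := by
            rw [← hS₁, mul_comm]
        _ ≤ partialStar (I₂ * Ideal.span ((fun e => monomial e (1 : k)) '' S₁)) :=
            incl_left S₁ I₂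
        _ = partialStar (I₁ * I₂) := by rw [← hS₁, mul_comm]
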